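/- Let B → K and C → K be ring homomorphisms with C → K surjective, A = B ×_K C, and let M be an A-module. If M ⊗_A B is a finitely generated B-module and M ⊗_A C is a finitely generated C-module, then M is a finitely generated A-module. -/

import Mathlib

open TensorProduct

private lemma ferrand_aux_exists_finset_span {R N : Type*} [Semiring R] [AddCommMonoid N]
    [Module R N] (hfin : Module.Finite R N) {s : Set N} (hs : Submodule.span R s = ⊤) :
    ∃ t : Finset N, ↑t ⊆ s ∧ Submodule.span R (↑t : Set N) = ⊤ := by
  classical
  obtain ⟨F, hF⟩ := Module.finite_def.mp hfin
  choose T hT1 hT2 using fun x : {x // x ∈ F} =>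
    Submodule.mem_span_finite_of_mem_span (S := s) (x := x.1) (by rw [hs]; trivial)
  refine ⟨F.attach.biUnion T, ?_, ?_⟩
  · intro y hy
    rw [Finset.coe_biUnion] at hy
    simp only [Set.mem_iUnion] at hy
    obtain ⟨x, _, hy⟩ := hy
    exact hT1 x hy
  · rw [eq_top_iff, ← hF]
    apply Submodule.span_le.mpr
    intro x hx
    refine Submodule.span_mono ?_ (hT2 ⟨x, hx⟩)
    intro y hy
    rw [Finset.coe_biUnion]
    simp only [Set.mem_iUnion]
    exact ⟨⟨x, hx⟩, F.mem_attach _, hy⟩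

/-- Descent of finite generation of modules through a Ferrand fiber product:
if `B ⊗_A M` and `C ⊗_A M` are finitely generated, then so is `M`. -/
theorem ferrand_descent_module_finite
    (A B C K : Type*) [CommRing A] [CommRing B] [CommRing C] [CommRing K]
    [Algebra A B] [Algebra A C] [Algebra A K] [Algebra B K] [Algebra C K]
    [IsScalarTower A B K] [IsScalarTower A C K]
    (hsurj : Function.Surjective (algebraMap C K))
    (hpull : ∀ (b : B) (c : C), algebraMap B K b = algebraMap C K c →
      ∃! a : A, algebraMap A B a = b ∧ algebraMap A C a = c)
    (M : Type*) [AddCommGroup M] [Module A M]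
    (hB : Module.Finite B (B ⊗[A] M))
    (hC : Module.Finite C (C ⊗[A] M)) :
    Module.Finite A M := by
  classical
  -- `A → B` is surjective
  have hABsurj : Function.Surjective (algebraMap A B) := by
    intro b
    obtain ⟨c, hc⟩ := hsurj (algebraMap B K b)
    obtain ⟨a, ⟨ha1, _⟩, _⟩ := hpull b c hc.symm
    exact ⟨a, ha1⟩
  -- spanning sets of the tensor products coming from `M`
  have hBspan : Submodule.span B (Set.range fun m : M => ((1 : B) ⊗ₜ[A] m : B ⊗[A] M)) = ⊤ := by
    rw [eq_top_iff]
    rintro x -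
    induction x with
    | zero => exact zero_mem _
    | tmul b m =>
        have : (b ⊗ₜ[A] m : B ⊗[A] M) = b • ((1 : B) ⊗ₜ[A] m) := by
          rw [TensorProduct.smul_tmul', smul_eq_mul, mul_one]
        rw [this]
        exact Submodule.smul_mem _ _ (Submodule.subset_span ⟨m, rfl⟩)
    | add x y hx hy => exact add_mem hx hy
  have hCspan : Submodule.span C (Set.range fun m : M => ((1 : C) ⊗ₜ[A] m : C ⊗[A] M)) = ⊤ := by
    rw [eq_top_iff]
    rintro x -
    induction x with
    | zero => exact zero_mem _
    | tmul c m =>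
        have : (c ⊗ₜ[A] m : C ⊗[A] M) = c • ((1 : C) ⊗ₜ[A] m) := by
          rw [TensorProduct.smul_tmul', smul_eq_mul, mul_one]
        rw [this]
        exact Submodule.smul_mem _ _ (Submodule.subset_span ⟨m, rfl⟩)
    | add x y hx hy => exact add_mem hx hy
  obtain ⟨tB, htBs, htB⟩ := ferrand_aux_exists_finset_span hB hBspan
  obtain ⟨tC, htCs, htC⟩ := ferrand_aux_exists_finset_span hC hCspan
  choose fB hfB using fun x : {x // x ∈ tB} => htBs x.2
  choose fC hfC using fun x : {x // x ∈ tC} => htCs x.2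
  set S : Finset M := tB.attach.image fB ∪ tC.attach.image fC with hS
  set N : Submodule A M := Submodule.span A (↑S : Set M) with hNdef
  -- it suffices to show N = ⊤
  suffices hN : N = ⊤ by
    refine Module.finite_def.mpr ⟨S, ?_⟩
    rw [← hNdef, hN]
  -- B ⊗ (M ⧸ N) is trivial
  have memSB : ∀ x : {x // x ∈ tB}, fB x ∈ N := fun x =>
    Submodule.subset_span (by
      simp only [hS, Finset.coe_union, Set.mem_union, Finset.coe_image]
      exact Or.inl ⟨x, by simp, rfl⟩)
  have memSC : ∀ x : {x // x ∈ tC}, fC x ∈ N := fun x =>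
    Submodule.subset_span (by
      simp only [hS, Finset.coe_union, Set.mem_union, Finset.coe_image]
      exact Or.inr ⟨x, by simp, rfl⟩)
  have hPB : Subsingleton (B ⊗[A] (M ⧸ N)) := by
    set f : B ⊗[A] M →ₗ[B] B ⊗[A] (M ⧸ N) := LinearMap.baseChange B N.mkQ with hf
    have hfsurj : Function.Surjective f := by
      have : (f : B ⊗[A] M → B ⊗[A] (M ⧸ N)) = LinearMap.lTensor B N.mkQ := by
        rw [hf]; exact LinearMap.baseChange_eq_ltensor N.mkQ
      rw [this]
      exact LinearMap.lTensor_surjective B (Submodule.mkQ_surjective N)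
    refine subsingleton_of_forall_eq 0 fun x => ?_
    obtain ⟨y, rfl⟩ := hfsurj x
    have hy : y ∈ Submodule.span B (↑tB : Set (B ⊗[A] M)) := by rw [htB]; trivial
    have hmap : f y ∈ Submodule.map f (Submodule.span B (↑tB : Set (B ⊗[A] M))) :=
      ⟨y, hy, rfl⟩
    rw [Submodule.map_span] at hmap
    have himg : f '' ↑tB ⊆ {0} := by
      rintro _ ⟨x, hx, rfl⟩
      have hx' := hfB ⟨x, hx⟩
      simp only at hx'
      have : f x = f ((1 : B) ⊗ₜ[A] fB ⟨x, hx⟩) := by rw [hx']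
      rw [this, hf, LinearMap.baseChange_tmul]
      have : N.mkQ (fB ⟨x, hx⟩) = 0 := (Submodule.Quotient.mk_eq_zero N).mpr (memSB ⟨x, hx⟩)
      rw [this, TensorProduct.tmul_zero]
      exact Set.mem_singleton _
    have := Submodule.span_mono himg hmap
    simpa using this
  have hPC : Subsingleton (C ⊗[A] (M ⧸ N)) := by
    set f : C ⊗[A] M →ₗ[C] C ⊗[A] (M ⧸ N) := LinearMap.baseChange C N.mkQ with hf
    have hfsurj : Function.Surjective f := by
      have : (f : C ⊗[A] M → C ⊗[A] (M ⧸ N)) = LinearMap.lTensor C N.mkQ := by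
        rw [hf]; exact LinearMap.baseChange_eq_ltensor N.mkQ
      rw [this]
      exact LinearMap.lTensor_surjective C (Submodule.mkQ_surjective N)
    refine subsingleton_of_forall_eq 0 fun x => ?_
    obtain ⟨y, rfl⟩ := hfsurj x
    have hy : y ∈ Submodule.span C (↑tC : Set (C ⊗[A] M)) := by rw [htC]; trivial
    have hmap : f y ∈ Submodule.map f (Submodule.span C (↑tC : Set (C ⊗[A] M))) :=
      ⟨y, hy, rfl⟩
    rw [Submodule.map_span] at hmap
    have himg : f '' ↑tC ⊆ {0} := by
      rintro _ ⟨x, hx, rfl⟩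
      have hx' := hfC ⟨x, hx⟩
      simp only at hx'
      have : f x = f ((1 : C) ⊗ₜ[A] fC ⟨x, hx⟩) := by rw [hx']
      rw [this, hf, LinearMap.baseChange_tmul]
      have : N.mkQ (fC ⟨x, hx⟩) = 0 := (Submodule.Quotient.mk_eq_zero N).mpr (memSC ⟨x, hx⟩)
      rw [this, TensorProduct.tmul_zero]
      exact Set.mem_singleton _
    have := Submodule.span_mono himg hmap
    simpa using this
  -- the kernel ideal of A → B
  set I : Ideal A := RingHom.ker (algebraMap A B) with hI
  -- from triviality of B ⊗ P we get P = I • P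
  have hIP : I • (⊤ : Submodule A (M ⧸ N)) = ⊤ := by
    have e1 : (A ⧸ I) ≃ₐ[A] B := by
      have : I = RingHom.ker (Algebra.ofId A B) := rfl
      rw [this]
      exact Ideal.quotientKerAlgEquivOfSurjective (f := Algebra.ofId A B) hABsurj
    have e2 : ((A ⧸ I) ⊗[A] (M ⧸ N)) ≃ₗ[A] (B ⊗[A] (M ⧸ N)) :=
      TensorProduct.congr e1.toLinearEquiv (LinearEquiv.refl A (M ⧸ N))
    have h1 : Subsingleton ((A ⧸ I) ⊗[A] (M ⧸ N)) := e2.toEquiv.subsingleton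
    have h2 : Subsingleton ((M ⧸ N) ⧸ (I • (⊤ : Submodule A (M ⧸ N)))) :=
      (TensorProduct.quotTensorEquivQuotSMul (M ⧸ N) I).symm.toEquiv.subsingleton
    exact Submodule.Quotient.subsingleton_iff.mp h2
  -- from triviality of C ⊗ P and the pullback property we get I • P = 0
  have hIkill : ∀ i ∈ I, ∀ p : M ⧸ N, i • p = 0 := by
    intro i hi p
    have hi' : algebraMap A B i = 0 := hi
    have hcomp : ∀ c : C, algebraMap B K (0 : B) = algebraMap C K (algebraMap A C i * c) := by
      intro c
      rw [map_zero, map_mul, ← IsScalarTower.algebraMap_apply A C K,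
        IsScalarTower.algebraMap_apply A B K, hi', map_zero, zero_mul]
    choose τ hτ huniq using fun c : C => hpull 0 (algebraMap A C i * c) (hcomp c)
    have hτB : ∀ c, algebraMap A B (τ c) = 0 := fun c => (hτ c).1
    have hτC : ∀ c, algebraMap A C (τ c) = algebraMap A C i * c := fun c => (hτ c).2
    have hadd : ∀ c c', τ (c + c') = τ c + τ c' := by
      intro c c'
      refine (huniq (c + c') (τ c + τ c') ⟨?_, ?_⟩).symm
      · rw [map_add, hτB, hτB, add_zero]
      · rw [map_add, hτC, hτC, mul_add]
    have hsmul : ∀ (a : A) (c : C), τ (a • c) = a * τ c := by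
      intro a c
      refine (huniq (a • c) (a * τ c) ⟨?_, ?_⟩).symm
      · rw [map_mul, hτB, mul_zero]
      · rw [map_mul, hτC, Algebra.smul_def]; ring
    have hone : τ 1 = i := by
      have := huniq 1 i ⟨hi', by rw [mul_one]⟩
      exact this.symm
    -- build the bilinear map
    let β : C →ₗ[A] (M ⧸ N) →ₗ[A] (M ⧸ N) :=
      { toFun := fun c => τ c • (LinearMap.id : (M ⧸ N) →ₗ[A] (M ⧸ N))
        map_add' := fun c c' => by ext p; simp [hadd, add_smul]
        map_smul' := fun a c => by ext p; simp [hsmul, mul_smul] }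
    let φ : C ⊗[A] (M ⧸ N) →ₗ[A] (M ⧸ N) := TensorProduct.lift β
    have h1 : ((1 : C) ⊗ₜ[A] p : C ⊗[A] (M ⧸ N)) = 0 := Subsingleton.elim _ _
    have h2 : φ ((1 : C) ⊗ₜ[A] p) = τ 1 • p := by
      simp only [φ, TensorProduct.lift.tmul]
      rfl
    rw [h1, map_zero] at h2
    rw [← hone]
    exact h2.symm
  -- conclude P = 0
  have hbot : I • (⊤ : Submodule A (M ⧸ N)) = ⊥ := by
    rw [eq_bot_iff]
    refine Submodule.smul_le.mpr fun r hr n _ => ?_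
    rw [Submodule.mem_bot]
    exact hIkill r hr n
  have : Subsingleton (M ⧸ N) := by
    refine subsingleton_of_forall_eq 0 fun p => ?_
    have : p ∈ (⊤ : Submodule A (M ⧸ N)) := trivial
    rw [← hIP, hbot, Submodule.mem_bot] at this
    exact this
  exact Submodule.Quotient.subsingleton_iff.mp this
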